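/- Let k be any field and let l ≤ m be positive integers. Then the Kronecker product J_0(l) ⊗ J_0(m) is similar to the block-diagonal direct sum of (m − l + 1) copies of J_0(l) together with 2 copies of J_0(i) for each i = 1, …, l − 1. -/

import Mathlib

open Matrix Kronecker

/-- The Jordan block of size `l` with eigenvalue `c` : the `l × l` matrix with `c` on the
diagonal, `1` directly above the diagonal and `0` elsewhere. -/
def jordanBlock {k : Type*} [Field k] (c : k) (l : ℕ) : Matrix (Fin l) (Fin l) k :=
  Matrix.of fun i j => if (j : ℕ) = i then c else if (j : ℕ) = (i : ℕ) + 1 then 1 else 0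

/-- Similarity of square matrices, allowing reindexing along a bijection of the
(equinumerous) index types. -/
def MatSimilar {k : Type*} [Field k] {α β : Type*} [Fintype α] [DecidableEq α]
    [Fintype β] [DecidableEq β] (A : Matrix α α k) (B : Matrix β β k) : Prop :=
  ∃ e : α ≃ β, ∃ T : Matrix β β k, IsUnit T ∧ Matrix.reindex e e A = T * B * T⁻¹

lemma jordanBlock_zero_apply {k : Type*} [Field k] (n : ℕ) (i j : Fin n) :
    jordanBlock (0 : k) n i j = if (j : ℕ) = (i : ℕ) + 1 then 1 else 0 := by
  unfold jordanBlock
  simp only [Matrix.of_apply]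
  split_ifs with h1 h2 h2 <;> first | rfl | (exfalso; omega)

/-- the basis permutation sending a block-diagonal index to a grid position -/
def tpF (l m : ℕ) (hlm : l ≤ m)
    (p : (b : Fin (m - l + 1) ⊕ (Fin (l - 1) × Fin 2)) ×
      Fin (Sum.elim (fun _ => l) (fun q => (q.1 : ℕ) + 1) b)) : Fin l × Fin m :=
  match p with
  | ⟨Sum.inl d, x⟩ =>
      (⟨(x : ℕ), x.2⟩,
       ⟨(x : ℕ) + (d : ℕ), by
          have hx : (x : ℕ) < l := x.2
          have hd : (d : ℕ) < m - l + 1 := d.2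
          omega⟩)
  | ⟨Sum.inr (t, c), x⟩ =>
      if (c : ℕ) = 0 then
        (⟨(x : ℕ), by
            have hx : (x : ℕ) < (t : ℕ) + 1 := x.2
            have ht : (t : ℕ) < l - 1 := t.2
            omega⟩,
         ⟨(x : ℕ) + (m - (t : ℕ) - 1), by
            have hx : (x : ℕ) < (t : ℕ) + 1 := x.2
            have ht : (t : ℕ) < l - 1 := t.2
            omega⟩)
      else
        (⟨(x : ℕ) + (l - (t : ℕ) - 1), by
            have hx : (x : ℕ) < (t : ℕ) + 1 := x.2
            have ht : (t : ℕ) < l - 1 := t.2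
            omega⟩,
         ⟨(x : ℕ), by
            have hx : (x : ℕ) < (t : ℕ) + 1 := x.2
            have ht : (t : ℕ) < l - 1 := t.2
            omega⟩)

lemma tpF_inj (l m : ℕ) (hlm : l ≤ m) : Function.Injective (tpF l m hlm) := by
  rintro ⟨b, x⟩ ⟨b', y⟩ h
  rcases b with d | ⟨t, c⟩ <;> rcases b' with d' | ⟨t', c'⟩
  · simp only [tpF, Prod.ext_iff, Fin.ext_iff, apply_ite Prod.fst, apply_ite Prod.snd,
      apply_ite Fin.val, Fin.val_mk] at h
    have hx : (x : ℕ) < l := x.2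
    obtain rfl : d = d' := Fin.ext (by omega)
    obtain rfl : x = y := Fin.ext (by omega)
    rfl
  · have hx : (x : ℕ) < l := x.2
    have hy : (y : ℕ) < (t' : ℕ) + 1 := y.2
    have ht' : (t' : ℕ) < l - 1 := t'.2
    have hd : (d : ℕ) < m - l + 1 := d.2
    simp only [tpF, Prod.ext_iff, Fin.ext_iff, apply_ite Prod.fst, apply_ite Prod.snd,
      apply_ite Fin.val, Fin.val_mk] at h
    split_ifs at h <;> (exfalso; omega)
  · have hy : (y : ℕ) < l := y.2
    have hx : (x : ℕ) < (t : ℕ) + 1 := x.2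
    have ht : (t : ℕ) < l - 1 := t.2
    have hd : (d' : ℕ) < m - l + 1 := d'.2
    simp only [tpF, Prod.ext_iff, Fin.ext_iff, apply_ite Prod.fst, apply_ite Prod.snd,
      apply_ite Fin.val, Fin.val_mk] at h
    split_ifs at h <;> (exfalso; omega)
  · have hx : (x : ℕ) < (t : ℕ) + 1 := x.2
    have hy : (y : ℕ) < (t' : ℕ) + 1 := y.2
    have ht : (t : ℕ) < l - 1 := t.2
    have ht' : (t' : ℕ) < l - 1 := t'.2
    have hc2 : (c : ℕ) < 2 := c.2
    have hc2' : (c' : ℕ) < 2 := c'.2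
    simp only [tpF, Prod.ext_iff, Fin.ext_iff, apply_ite Prod.fst, apply_ite Prod.snd,
      apply_ite Fin.val, Fin.val_mk] at h
    split_ifs at h with hc hc' <;>
      first
        | (exfalso; omega)
        | (obtain rfl : t = t' := Fin.ext (by omega)
           obtain rfl : c = c' := Fin.ext (by omega)
           obtain rfl : x = y := Fin.ext (by omega)
           rfl)

lemma tpF_surj (l m : ℕ) (hlm : l ≤ m) : Function.Surjective (tpF l m hlm) := by
  rintro ⟨i, j⟩
  have hi : (i : ℕ) < l := i.2
  have hj : (j : ℕ) < m := j.2
  by_cases h1 : (i : ℕ) ≤ j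
  · by_cases h2 : (j : ℕ) - i ≤ m - l
    · refine ⟨⟨Sum.inl ⟨(j : ℕ) - i, by omega⟩,
        ⟨(i : ℕ), (by omega : (i : ℕ) < l)⟩⟩, ?_⟩
      simp only [tpF, Prod.ext_iff, Fin.ext_iff, apply_ite Prod.fst, apply_ite Prod.snd,
      apply_ite Fin.val, Fin.val_mk]
      constructor <;> first | trivial | omega
    · refine ⟨⟨Sum.inr (⟨m - ((j : ℕ) - i) - 1, by omega⟩, ⟨0, by omega⟩),
        ⟨(i : ℕ), (by omega : (i : ℕ) < m - ((j : ℕ) - i) - 1 + 1)⟩⟩, ?_⟩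
      simp only [tpF, Prod.ext_iff, Fin.ext_iff, apply_ite Prod.fst, apply_ite Prod.snd,
      apply_ite Fin.val, Fin.val_mk]
      split_ifs <;> constructor <;> first | trivial | omega
  · refine ⟨⟨Sum.inr (⟨l - ((i : ℕ) - j) - 1, by omega⟩, ⟨1, by omega⟩),
      ⟨(j : ℕ), (by omega : (j : ℕ) < l - ((i : ℕ) - j) - 1 + 1)⟩⟩, ?_⟩
    simp only [tpF, Prod.ext_iff, Fin.ext_iff, apply_ite Prod.fst, apply_ite Prod.snd,
      apply_ite Fin.val, Fin.val_mk]
    split_ifs <;> constructor <;> first | trivial | omega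

lemma kron_entry {k : Type*} [Field k] (l m : ℕ) (p q : Fin l × Fin m) :
    (jordanBlock (0 : k) l ⊗ₖ jordanBlock (0 : k) m) p q
      = if (q.1 : ℕ) = (p.1 : ℕ) + 1 ∧ (q.2 : ℕ) = (p.2 : ℕ) + 1 then 1 else 0 := by
  rw [Matrix.kroneckerMap_apply, jordanBlock_zero_apply, jordanBlock_zero_apply]
  split_ifs with h1 h2 h3 h2 <;> simp_all

theorem stmt2 {k : Type*} [Field k] (l m : ℕ) (hl : 0 < l) (hm : 0 < m) (hlm : l ≤ m) :
    MatSimilar (jordanBlock (0 : k) l ⊗ₖ jordanBlock (0 : k) m)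
      (Matrix.blockDiagonal'
        (fun i : Fin (m - l + 1) ⊕ (Fin (l - 1) × Fin 2) =>
          jordanBlock (0 : k) (Sum.elim (fun _ => l) (fun p => (p.1 : ℕ) + 1) i))) := by
  have hbij : Function.Bijective (tpF l m hlm) := ⟨tpF_inj l m hlm, tpF_surj l m hlm⟩
  refine ⟨(Equiv.ofBijective _ hbij).symm, 1, isUnit_one, ?_⟩
  rw [inv_one, one_mul, mul_one, Matrix.reindex_apply, Equiv.symm_symm]
  ext p q
  rw [Matrix.submatrix_apply]
  simp only [Equiv.ofBijective_apply]
  rw [kron_entry]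
  obtain ⟨b, x⟩ := p
  obtain ⟨b', y⟩ := q
  rcases eq_or_ne b b' with rfl | hne
  · rw [Matrix.blockDiagonal'_apply_eq, jordanBlock_zero_apply]
    rcases b with d | ⟨t, c⟩
    · simp only [tpF, apply_ite Prod.fst, apply_ite Prod.snd,
      apply_ite Fin.val, Fin.val_mk]
      split_ifs <;> first | rfl | (exfalso; omega) | grind
    · have hx : (x : ℕ) < (t : ℕ) + 1 := x.2
      have hy : (y : ℕ) < (t : ℕ) + 1 := y.2
      have ht : (t : ℕ) < l - 1 := t.2
      simp only [tpF, apply_ite Prod.fst, apply_ite Prod.snd,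
      apply_ite Fin.val, Fin.val_mk]
      split_ifs <;> first | rfl | (exfalso; omega)
  · rw [Matrix.blockDiagonal'_apply_ne _ _ _ hne]
    rcases b with d | ⟨t, c⟩ <;> rcases b' with d' | ⟨t', c'⟩
    · have hdd : (d : ℕ) ≠ (d' : ℕ) := fun hh => hne (by rw [Fin.ext hh])
      have hx : (x : ℕ) < l := x.2
      have hy : (y : ℕ) < l := y.2
      simp only [tpF, apply_ite Prod.fst, apply_ite Prod.snd,
      apply_ite Fin.val, Fin.val_mk]
      split_ifs <;> first | rfl | (exfalso; omega) | grind
    · have hy : (y : ℕ) < (t' : ℕ) + 1 := y.2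
      have ht' : (t' : ℕ) < l - 1 := t'.2
      have hd : (d : ℕ) < m - l + 1 := d.2
      have hx : (x : ℕ) < l := x.2
      simp only [tpF, apply_ite Prod.fst, apply_ite Prod.snd,
      apply_ite Fin.val, Fin.val_mk]
      split_ifs <;> first | rfl | (exfalso; omega)
    · have hx : (x : ℕ) < (t : ℕ) + 1 := x.2
      have ht : (t : ℕ) < l - 1 := t.2
      have hd : (d' : ℕ) < m - l + 1 := d'.2
      have hy : (y : ℕ) < l := y.2
      simp only [tpF, apply_ite Prod.fst, apply_ite Prod.snd,
      apply_ite Fin.val, Fin.val_mk]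
      split_ifs <;> first | rfl | (exfalso; omega)
    · have hx : (x : ℕ) < (t : ℕ) + 1 := x.2
      have hy : (y : ℕ) < (t' : ℕ) + 1 := y.2
      have ht : (t : ℕ) < l - 1 := t.2
      have ht' : (t' : ℕ) < l - 1 := t'.2
      have hc2 : (c : ℕ) < 2 := c.2
      have hc2' : (c' : ℕ) < 2 := c'.2
      have hne2 : (t : ℕ) ≠ (t' : ℕ) ∨ (c : ℕ) ≠ (c' : ℕ) := by
        by_contra hcon
        push_neg at hcon
        exact hne (by rw [Fin.ext hcon.1, Fin.ext hcon.2])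
      simp only [tpF, apply_ite Prod.fst, apply_ite Prod.snd,
      apply_ite Fin.val, Fin.val_mk]
      split_ifs <;> first | rfl | (exfalso; omega)
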